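/- Let o : [ω₁]² → ω be such that every level of the tree T(o) = {o(·,β) ↾ α : α ≤ β < ω₁} is countable, set c(α,β) = o(α,β) mod 2, and let τ[X] denote the associated topology on each X ⊆ ω₁. Then for every uncountable X ⊆ ω₁, the product space (X, τ[X]) × (X, τ[X]) contains an uncountable discrete subspace. -/

import Mathlib

/-- The first uncountable ordinal. -/
noncomputable def omega1 : Ordinal := (Cardinal.aleph 1).ord

/-- `W_α = {α} ∪ {β < ω₁ : α < β and c(α,β) = 1}` for the coloring
`c(α,β) = o(α,β) mod 2`. -/
noncomputable def Wset (o : Ordinal → Ordinal → ℕ) (α : Ordinal) : Set Ordinal :=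
  {α} ∪ {β | β < omega1 ∧ α < β ∧ o α β % 2 = 1}

/-- The topology `τ[X]` on `X ⊆ ω₁`: generated by the subbasis consisting of the
sets `W_ξ ∩ X` and `X \ W_ξ` for `ξ ∈ X` (each `W_ξ ∩ X` is declared clopen). -/
noncomputable def tauTop (o : Ordinal → Ordinal → ℕ) (X : Set Ordinal) :
    TopologicalSpace X :=
  TopologicalSpace.generateFrom
    ({s | ∃ ξ ∈ X, s = {x : X | x.val ∈ Wset o ξ}} ∪
     {s | ∃ ξ ∈ X, s = {x : X | x.val ∉ Wset o ξ}})



lemma omega1_pos : 0 < omega1.{u} :=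
  Cardinal.lt_ord.2 (by simpa using (Cardinal.aleph_pos 1))

lemma countable_Iio_of_lt_omega1 {γ : Ordinal.{u}} (hγ : γ < omega1) :
    (Set.Iio γ).Countable := by
  rw [Cardinal.countable_iff_lt_aleph_one, Ordinal.mk_Iio_ordinal]
  have h1 : γ.card < Cardinal.aleph 1 := Cardinal.lt_ord.1 hγ
  have : Cardinal.lift.{u+1} γ.card < Cardinal.lift.{u+1} (Cardinal.aleph 1) :=
    Cardinal.lift_lt.2 h1
  rwa [Cardinal.lift_aleph, Ordinal.lift_one] at this

lemma exists_bound_of_countable {S : Set Ordinal.{u}} (hS : S.Countable)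
    (hSlt : S ⊆ Set.Iio omega1) : ∃ γ, γ < omega1.{u} ∧ ∀ x ∈ S, x < γ := by
  rcases S.eq_empty_or_nonempty with rfl | hne
  · exact ⟨0, omega1_pos, by simp⟩
  obtain ⟨f, rfl⟩ := hS.exists_eq_range hne
  have hlim : Order.IsSuccLimit omega1.{u} := Cardinal.isSuccLimit_ord (by
    simp [Cardinal.aleph0_le_aleph])
  refine ⟨⨆ n, f n + 1, ?_, ?_⟩
  · apply Ordinal.iSup_lt_ord_lift
    · rw [Cardinal.mk_nat, Cardinal.lift_aleph0, show omega1.{u}.cof = Cardinal.aleph 1 from Cardinal.isRegular_aleph_one.cof_eq]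
      exact Cardinal.aleph0_lt_aleph_one
    · intro n
      have : f n < omega1 := hSlt ⟨n, rfl⟩
      have h := hlim.succ_lt this; rwa [← Ordinal.add_one_eq_succ] at h
  · rintro x ⟨n, rfl⟩
    have h1 : f n < f n + 1 := by
      rw [Ordinal.add_one_eq_succ]; exact Order.lt_succ _
    exact h1.trans_le (Ordinal.le_iSup (fun n => f n + 1) n)

lemma exists_agreeing_pair (o : Ordinal.{u} → Ordinal.{u} → ℕ)
    {γ : Ordinal.{u}} (hγ : γ < omega1)
    (hL : {g : ↥(Set.Iio γ) → ℕ |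
        ∃ β : Ordinal, γ ≤ β ∧ β < omega1 ∧
          ∀ ξ : ↥(Set.Iio γ), g ξ = o ξ.val β}.Countable)
    {X : Set Ordinal.{u}} (hX : X ⊆ Set.Iio omega1) (hXu : ¬ X.Countable) :
    ∃ a ∈ X, ∃ b ∈ X, γ ≤ a ∧ a < b ∧ ∀ ξ < γ, o ξ a = o ξ b := by
  set X' : Set Ordinal.{u} := X \ Set.Iio γ with hX'
  have hX'u : ¬ X'.Countable := by
    intro h
    exact hXu <| (h.union (countable_Iio_of_lt_omega1 hγ)).mono
      (fun x hx => by by_cases hc : x < γ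
                      · exact Or.inr hc
                      · exact Or.inl ⟨hx, hc⟩)
  set φ : Ordinal.{u} → (↥(Set.Iio γ) → ℕ) := fun β ξ => o ξ.val β with hφ
  have hmaps : ∀ β ∈ X', φ β ∈ {g : ↥(Set.Iio γ) → ℕ |
      ∃ β : Ordinal, γ ≤ β ∧ β < omega1 ∧ ∀ ξ : ↥(Set.Iio γ), g ξ = o ξ.val β} := by
    intro β hβ
    exact ⟨β, not_lt.1 hβ.2, hX hβ.1, fun ξ => rfl⟩
  have hninj : ¬ Set.InjOn φ X' := by
    intro hinj
    apply hX'u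
    rw [Cardinal.countable_iff_lt_aleph_one]
    rw [← Cardinal.mk_image_eq_of_injOn φ X' hinj]
    rw [← Cardinal.countable_iff_lt_aleph_one]
    exact hL.mono (by rintro g ⟨β, hβ, rfl⟩; exact hmaps β hβ)
  rw [Set.InjOn] at hninj
  push_neg at hninj
  obtain ⟨a, ha, b, hb, hab, hne⟩ := hninj
  have key : ∀ a b : Ordinal.{u}, φ a = φ b → ∀ ξ < γ, o ξ a = o ξ b := by
    intro a b h ξ hξ
    exact congrFun h ⟨ξ, hξ⟩
  rcases hne.lt_or_gt with h | h
  · exact ⟨a, ha.1, b, hb.1, not_lt.1 ha.2, h, key a b hab⟩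
  · exact ⟨b, hb.1, a, ha.1, not_lt.1 hb.2, h, key b a hab.symm⟩

lemma exists_uncountable_good (o : Ordinal.{u} → Ordinal.{u} → ℕ)
    (hlev : ∀ α < omega1.{u},
      {g : ↥(Set.Iio α) → ℕ |
        ∃ β : Ordinal, α ≤ β ∧ β < omega1 ∧
          ∀ ξ : ↥(Set.Iio α), g ξ = o ξ.val β}.Countable)
    (X : Set Ordinal.{u}) (hX : X ⊆ Set.Iio omega1) (hXu : ¬ X.Countable) :
    ∃ m : Set (Ordinal.{u} × Ordinal.{u}), ¬ m.Countable ∧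
      (∀ p ∈ m, p.1 ∈ X ∧ p.2 ∈ X ∧ p.1 < p.2) ∧
      (∀ p ∈ m, ∀ q ∈ m, p ≠ q → p.2 < q.1 ∨ q.2 < p.1) ∧
      (∀ p ∈ m, ∀ q ∈ m, p.2 < q.1 → o p.2 q.1 % 2 = o p.2 q.2 % 2) := by
  set Good : Set (Set (Ordinal.{u} × Ordinal.{u})) :=
    {P | (∀ p ∈ P, p.1 ∈ X ∧ p.2 ∈ X ∧ p.1 < p.2) ∧
      (∀ p ∈ P, ∀ q ∈ P, p ≠ q → p.2 < q.1 ∨ q.2 < p.1) ∧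
      (∀ p ∈ P, ∀ q ∈ P, p.2 < q.1 → o p.2 q.1 % 2 = o p.2 q.2 % 2)} with hGood
  obtain ⟨m, hm⟩ := zorn_subset Good (by
    intro c hc hchain
    refine ⟨⋃₀ c, ⟨?_, ?_, ?_⟩, fun s hs => Set.subset_sUnion_of_mem hs⟩
    · rintro p ⟨s, hs, hps⟩
      exact (hc hs).1 p hps
    · rintro p ⟨s, hs, hps⟩ q ⟨t, ht, hqt⟩ hne
      rcases eq_or_ne s t with rfl | hst
      · exact (hc hs).2.1 p hps q hqt hne
      · rcases hchain hs ht hst with h | h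
        · exact (hc ht).2.1 p (h hps) q hqt hne
        · exact (hc hs).2.1 p hps q (h hqt) hne
    · rintro p ⟨s, hs, hps⟩ q ⟨t, ht, hqt⟩ hlt
      rcases eq_or_ne s t with rfl | hst
      · exact (hc hs).2.2 p hps q hqt hlt
      · rcases hchain hs ht hst with h | h
        · exact (hc ht).2.2 p (h hps) q hqt hlt
        · exact (hc hs).2.2 p hps q (h hqt) hlt)
  refine ⟨m, ?_, hm.prop.1, hm.prop.2.1, hm.prop.2.2⟩
  -- now show m is uncountable, using maximality
  intro hmc
  have hS : ((Prod.fst '' m) ∪ (Prod.snd '' m)).Countable :=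
    (hmc.image _).union (hmc.image _)
  have hSlt : ((Prod.fst '' m) ∪ (Prod.snd '' m)) ⊆ Set.Iio omega1 := by
    rintro x (⟨p, hp, rfl⟩ | ⟨p, hp, rfl⟩)
    · exact hX ((hm.prop.1 p hp).1)
    · exact hX ((hm.prop.1 p hp).2.1)
  obtain ⟨γ, hγ, hγb⟩ := exists_bound_of_countable hS hSlt
  obtain ⟨a, ha, b, hb, hγa, hab, hagree⟩ :=
    exists_agreeing_pair o hγ (hlev γ hγ) hX hXu
  have hnotmem : (a, b) ∉ m := by
    intro h
    exact absurd (hγb a (Or.inl ⟨(a,b), h, rfl⟩)) (not_lt.2 hγa)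
  have hsnd_lt : ∀ p ∈ m, p.2 < γ := fun p hp => hγb p.2 (Or.inr ⟨p, hp, rfl⟩)
  have hgood' : insert (a, b) m ∈ Good := by
    refine ⟨?_, ?_, ?_⟩
    · rintro p (rfl | hp)
      · exact ⟨ha, hb, hab⟩
      · exact hm.prop.1 p hp
    · rintro p (rfl | hp) q (rfl | hq) hne
      · exact absurd rfl hne
      · exact Or.inr ((hsnd_lt q hq).trans_le hγa)
      · exact Or.inl ((hsnd_lt p hp).trans_le hγa)
      · exact hm.prop.2.1 p hp q hq hne
    · rintro p (rfl | hp) q (rfl | hq) hlt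
      · exact absurd hlt (not_lt.2 hab.le)
      · have h1 : q.1 < γ := hγb q.1 (Or.inl ⟨q, hq, rfl⟩)
        exact absurd (hlt.trans h1) (not_lt.2 (hγa.trans hab.le))
      · show o p.2 a % 2 = o p.2 b % 2
        rw [hagree p.2 (hsnd_lt p hp)]
      · exact hm.prop.2.2 p hp q hq hlt
  have := hm.2 hgood' (Set.subset_insert _ _)
  exact hnotmem (this (Set.mem_insert _ _))

/-- **Theorem (Moore).** Let `o : [ω₁]² → ω` be such that every level of the
tree `T(o) = {o(·,β) ↾ α : α ≤ β < ω₁}` is countable, and let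
`c(α,β) = o(α,β) mod 2`.  Then for every uncountable `X ⊆ ω₁` the square
`(X, τ[X]) × (X, τ[X])` contains an uncountable discrete subspace. -/

theorem statement19 (o : Ordinal → Ordinal → ℕ)
    -- every level of `T(o)` is countable:
    (hlev : ∀ α < omega1,
      {g : ↥(Set.Iio α) → ℕ |
        ∃ β : Ordinal, α ≤ β ∧ β < omega1 ∧
          ∀ ξ : ↥(Set.Iio α), g ξ = o ξ.val β}.Countable)
    (X : Set Ordinal) (hX : X ⊆ Set.Iio omega1) (hXu : ¬ X.Countable) :
    letI : TopologicalSpace X := tauTop o X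
    ∃ D : Set (X × X), ¬ D.Countable ∧ DiscreteTopology D := by
  letI : TopologicalSpace X := tauTop o X
  show ∃ D : Set (X × X), ¬ D.Countable ∧ DiscreteTopology D
  obtain ⟨m, hmu, h1, h2, h3⟩ := exists_uncountable_good o hlev X hX hXu
  have hWmem : ∀ ξ x : Ordinal, x ∈ Wset o ξ ↔
      (x = ξ ∨ (x < omega1 ∧ ξ < x ∧ o ξ x % 2 = 1)) := by
    intro ξ x; simp [Wset]
  have hWopen : ∀ ξ ∈ X, IsOpen {x : X | x.val ∈ Wset o ξ} := fun ξ hξ =>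
    TopologicalSpace.GenerateOpen.basic _ (Or.inl ⟨ξ, hξ, rfl⟩)
  have hWcopen : ∀ ξ ∈ X, IsOpen {x : X | x.val ∉ Wset o ξ} := fun ξ hξ =>
    TopologicalSpace.GenerateOpen.basic _ (Or.inr ⟨ξ, hξ, rfl⟩)
  refine ⟨{d : X × X | (d.1.val, d.2.val) ∈ m}, ?_, ?_⟩
  · intro hc
    apply hmu
    have hsub : m ⊆ (fun d : X × X => (d.1.val, d.2.val)) ''
        {d : X × X | (d.1.val, d.2.val) ∈ m} := by
      intro p hp
      obtain ⟨hp1, hp2, _⟩ := h1 p hp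
      exact ⟨(⟨p.1, hp1⟩, ⟨p.2, hp2⟩), hp, by simp⟩
    exact Set.Countable.mono hsub (hc.image _)
  · rw [discreteTopology_iff_isOpen_singleton]
    intro a
    rw [isOpen_induced_iff]
    obtain ⟨d, hd⟩ := a
    have hdm : ((d.1.val : Ordinal), (d.2.val : Ordinal)) ∈ m := hd
    have hd12 : (d.1.val : Ordinal) < d.2.val := (h1 _ hdm).2.2
    refine ⟨({x : X | x.val ∈ Wset o d.1.val} ∩ {x : X | x.val ∉ Wset o d.2.val}) ×ˢ
        {x : X | x.val ∈ Wset o d.2.val},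
      ((hWopen _ d.1.prop).inter (hWcopen _ d.2.prop)).prod (hWopen _ d.2.prop), ?_⟩
    ext e
    obtain ⟨c, hcD⟩ := e
    simp only [Set.mem_preimage, Set.mem_singleton_iff, Set.mem_prod, Set.mem_inter_iff,
      Set.mem_setOf_eq, Subtype.mk.injEq]
    constructor
    · rintro ⟨⟨he1, he2⟩, he3⟩
      have hcm : ((c.1.val : Ordinal), (c.2.val : Ordinal)) ∈ m := hcD
      have hc12 : (c.1.val : Ordinal) < c.2.val := (h1 _ hcm).2.2
      rcases eq_or_ne ((c.1.val : Ordinal), (c.2.val : Ordinal))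
          ((d.1.val : Ordinal), (d.2.val : Ordinal)) with heq | hne
      · rw [Prod.mk.injEq] at heq
        exact Prod.ext (Subtype.ext heq.1) (Subtype.ext heq.2)
      · exfalso
        rcases h2 _ hcm _ hdm hne with hlt | hlt
      -- case c.2 < d.1 : contradicts he1 : c.1 ∈ W_{d.1}
        · rcases (hWmem _ _).1 he1 with h | h
          · exact absurd (h ▸ hc12) (not_lt.2 (le_of_lt (by simpa using hlt)))
          · exact absurd (h.2.1.trans (hc12.trans (by simpa using hlt))) (lt_irrefl _)
      -- case d.2 < c.1
        · have hlt' : (d.2.val : Ordinal) < c.1.val := by simpa using hlt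
          have hne1 : (o d.2.val c.1.val) % 2 ≠ 1 := by
            intro hone
            exact he2 ((hWmem _ _).2 (Or.inr ⟨hX c.1.prop, hlt', hone⟩))
          have hone2 : (o d.2.val c.2.val) % 2 = 1 := by
            rcases (hWmem _ _).1 he3 with h | h
            · exact absurd (h ▸ (hlt'.trans hc12)) (lt_irrefl _)
            · exact h.2.2
          exact hne1 ((h3 _ hdm _ hcm hlt').trans hone2)
    · rintro ⟨rfl, rfl⟩
      refine ⟨⟨(hWmem _ _).2 (Or.inl rfl), ?_⟩, (hWmem _ _).2 (Or.inl rfl)⟩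
      intro hmem
      rcases (hWmem _ _).1 hmem with h | h
      · exact absurd (h ▸ hd12) (lt_irrefl _)
      · exact absurd (h.2.1.trans hd12) (lt_irrefl _)
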